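/- arXiv:0909.5162 — 4 statements merged into one kernel-verified Lean document; each statement's English description precedes it below -/
import Mathlib

section
/- Let A be an n×n matrix with non-negative real entries. Then for any k ≤ n there exists a subset F of {1,…,n} with |F| = k such that the sum of off-diagonal entries A_{i,j} over i,j ∈ F with i ≠ j is at most (k²/n²) times the sum of all off-diagonal entries of A. -/
open Finset

/-- Number of `k`-subsets of `s` containing a fixed subset `t`. -/
lemma count_superset {α : Type*} [DecidableEq α] (s t : Finset α) (k : ℕ)
    (hts : t ⊆ s) (htk : t.card ≤ k) :
    ((s.powersetCard k).filter (fun F => t ⊆ F)).card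
      = (s.card - t.card).choose (k - t.card) := by
  rw [← Finset.card_sdiff_of_subset hts, ← Finset.card_powersetCard (k - t.card) (s \ t)]
  apply Finset.card_bij' (fun F _ => F \ t) (fun G _ => G ∪ t)
  · intro F hF
    simp only [Finset.mem_filter, Finset.mem_powersetCard] at hF
    obtain ⟨⟨hFs, hFk⟩, htF⟩ := hF
    rw [Finset.mem_powersetCard]
    exact ⟨Finset.sdiff_subset_sdiff hFs le_rfl, by rw [Finset.card_sdiff_of_subset htF, hFk]⟩
  · intro G hG
    rw [Finset.mem_powersetCard] at hG
    obtain ⟨hGs, hGk⟩ := hG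
    have hdisj : Disjoint G t := Finset.disjoint_of_subset_left hGs Finset.sdiff_disjoint
    simp only [Finset.mem_filter, Finset.mem_powersetCard]
    refine ⟨⟨Finset.union_subset (hGs.trans Finset.sdiff_subset) hts, ?_⟩,
      Finset.subset_union_right⟩
    rw [Finset.card_union_of_disjoint hdisj, hGk, Nat.sub_add_cancel htk]
  · intro F hF
    simp only [Finset.mem_filter] at hF
    exact Finset.sdiff_union_of_subset hF.2
  · intro G hG
    rw [Finset.mem_powersetCard] at hG
    exact Finset.union_sdiff_cancel_right
      (Finset.disjoint_of_subset_left hG.1 Finset.sdiff_disjoint)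

lemma choose_ineq {n k : ℕ} (hk : k ≤ n) (h2 : 2 ≤ k) :
    (n : ℝ) ^ 2 * (n - 2).choose (k - 2) ≤ (k : ℝ) ^ 2 * n.choose k := by
  obtain ⟨n', rfl⟩ : ∃ n', n = n' + 2 := ⟨n - 2, by omega⟩
  obtain ⟨k', rfl⟩ : ∃ k', k = k' + 2 := ⟨k - 2, by omega⟩
  have hk' : k' ≤ n' := by omega
  simp only [Nat.add_sub_cancel]
  set C₂ := n'.choose k' with hC₂
  set C := (n' + 2).choose (k' + 2) with hC
  have h0 := Nat.add_one_mul_choose_eq n' k'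
  have h1 := Nat.add_one_mul_choose_eq (n' + 1) (k' + 1)
  have e : (n' + 2) * (n' + 1) * C₂ = (k' + 2) * (k' + 1) * C := by
    calc (n' + 2) * (n' + 1) * C₂
        = (n' + 2) * ((n' + 1) * n'.choose k') := by ring
      _ = (n' + 2) * ((n' + 1).choose (k' + 1) * (k' + 1)) := by rw [h0]
      _ = ((n' + 2) * (n' + 1).choose (k' + 1)) * (k' + 1) := by ring
      _ = ((n' + 2).choose (k' + 2) * (k' + 2)) * (k' + 1) := by rw [h1]
      _ = (k' + 2) * (k' + 1) * C := by rw [hC]; ring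
  have big : (n' + 2) ^ 2 * C₂ * ((n' + 1) * (k' + 2))
      ≤ (k' + 2) ^ 2 * C * ((n' + 1) * (k' + 2)) := by
    calc (n' + 2) ^ 2 * C₂ * ((n' + 1) * (k' + 2))
        = ((n' + 2) * (n' + 1) * C₂) * ((n' + 2) * (k' + 2)) := by ring
      _ = ((k' + 2) * (k' + 1) * C) * ((n' + 2) * (k' + 2)) := by rw [e]
      _ = ((k' + 2) ^ 2 * C) * ((n' + 2) * (k' + 1)) := by ring
      _ ≤ ((k' + 2) ^ 2 * C) * ((n' + 1) * (k' + 2)) := by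
          apply Nat.mul_le_mul_left
          nlinarith [hk']
      _ = (k' + 2) ^ 2 * C * ((n' + 1) * (k' + 2)) := by ring
  have hnat : (n' + 2) ^ 2 * C₂ ≤ (k' + 2) ^ 2 * C :=
    Nat.le_of_mul_le_mul_right big (by positivity)
  exact_mod_cast hnat

theorem stmt0 (n k : ℕ) (hk : k ≤ n) (A : Matrix (Fin n) (Fin n) ℝ)
    (hA : ∀ i j, 0 ≤ A i j) :
    ∃ F : Finset (Fin n), F.card = k ∧
      ∑ i ∈ F, ∑ j ∈ F, (if i ≠ j then A i j else 0) ≤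
        ((k : ℝ) ^ 2 / (n : ℝ) ^ 2) *
          ∑ i : Fin n, ∑ j : Fin n, (if i ≠ j then A i j else 0) := by
  set T := ∑ i : Fin n, ∑ j : Fin n, (if i ≠ j then A i j else 0) with hT
  have hT0 : 0 ≤ T :=
    Finset.sum_nonneg fun i _ => Finset.sum_nonneg fun j _ => by
      split_ifs
      exacts [hA i j, le_rfl]
  by_cases hk2 : 2 ≤ k
  · -- main averaging case
    have hn2 : 2 ≤ n := hk2.trans hk
    set S := (Finset.univ : Finset (Fin n)).powersetCard k with hSdef
    have hSne : S.Nonempty := Finset.powersetCard_nonempty.mpr (by simpa using hk)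
    have hScard : S.card = n.choose k := by
      rw [hSdef, Finset.card_powersetCard, Finset.card_univ, Fintype.card_fin]
    set g : Fin n → Fin n → ℝ := fun i j => if i ≠ j then A i j else 0 with hg
    -- rewrite each inner sum over univ
    have expand : ∀ F : Finset (Fin n), ∑ i ∈ F, ∑ j ∈ F, g i j
        = ∑ i : Fin n, ∑ j : Fin n, if i ∈ F ∧ j ∈ F then g i j else 0 := by
      intro F
      symm
      calc ∑ i : Fin n, ∑ j : Fin n, (if i ∈ F ∧ j ∈ F then g i j else 0)
          = ∑ i : Fin n, (if i ∈ F then ∑ j ∈ F, g i j else 0) := by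
            refine Finset.sum_congr rfl fun i _ => ?_
            by_cases hi : i ∈ F
            · simp only [hi, true_and, if_true]
              rw [Finset.sum_ite_mem, Finset.univ_inter]
            · simp [hi]
        _ = ∑ i ∈ F, ∑ j ∈ F, g i j := by rw [Finset.sum_ite_mem, Finset.univ_inter]
    have key : ∑ F ∈ S, ∑ i ∈ F, ∑ j ∈ F, g i j = ((n - 2).choose (k - 2) : ℝ) * T := by
      calc ∑ F ∈ S, ∑ i ∈ F, ∑ j ∈ F, g i j
          = ∑ F ∈ S, ∑ i : Fin n, ∑ j : Fin n, (if i ∈ F ∧ j ∈ F then g i j else 0) :=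
            Finset.sum_congr rfl fun F _ => expand F
        _ = ∑ i : Fin n, ∑ j : Fin n, ∑ F ∈ S, (if i ∈ F ∧ j ∈ F then g i j else 0) := by
            rw [Finset.sum_comm]
            exact Finset.sum_congr rfl fun i _ => Finset.sum_comm
        _ = ∑ i : Fin n, ∑ j : Fin n, ((n - 2).choose (k - 2) : ℝ) * g i j := by
            refine Finset.sum_congr rfl fun i _ => Finset.sum_congr rfl fun j _ => ?_
            by_cases hij : i = j
            · simp [hij, hg]
            · rw [← Finset.sum_filter]
              have hfe : S.filter (fun F => i ∈ F ∧ j ∈ F)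
                  = S.filter (fun F => ({i, j} : Finset (Fin n)) ⊆ F) := by
                apply Finset.filter_congr
                intro F _
                simp [Finset.insert_subset_iff]
              have hc2 : ({i, j} : Finset (Fin n)).card = 2 := Finset.card_pair hij
              rw [hfe, Finset.sum_const, hSdef,
                count_superset _ _ _ (Finset.subset_univ _) (by rw [hc2]; exact hk2),
                hc2, Finset.card_univ, Fintype.card_fin, nsmul_eq_mul]
        _ = ((n - 2).choose (k - 2) : ℝ) * T := by
            rw [hT, Finset.mul_sum]
            exact Finset.sum_congr rfl fun i _ => (Finset.mul_sum _ _ _).symm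
    have hn0 : (0 : ℝ) < (n : ℝ) ^ 2 := by
      have : 0 < n := by omega
      positivity
    have hch : ((n - 2).choose (k - 2) : ℝ) ≤ (k : ℝ) ^ 2 / (n : ℝ) ^ 2 * (n.choose k : ℝ) := by
      rw [div_mul_eq_mul_div, le_div_iff₀ hn0]
      nlinarith [choose_ineq hk hk2]
    have avg : ∑ F ∈ S, ∑ i ∈ F, ∑ j ∈ F, g i j
        ≤ ∑ _F ∈ S, ((k : ℝ) ^ 2 / (n : ℝ) ^ 2 * T) := by
      rw [key, Finset.sum_const, hScard, nsmul_eq_mul]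
      calc ((n - 2).choose (k - 2) : ℝ) * T
          ≤ ((k : ℝ) ^ 2 / (n : ℝ) ^ 2 * (n.choose k : ℝ)) * T :=
            mul_le_mul_of_nonneg_right hch hT0
        _ = (n.choose k : ℝ) * ((k : ℝ) ^ 2 / (n : ℝ) ^ 2 * T) := by ring
    obtain ⟨F, hFS, hle⟩ := Finset.exists_le_of_sum_le hSne avg
    exact ⟨F, (Finset.mem_powersetCard.mp hFS).2, hle⟩
  · -- k ≤ 1
    push_neg at hk2
    obtain ⟨F, hFsub, hFcard⟩ :=
      Finset.exists_subset_card_eq (show k ≤ (Finset.univ : Finset (Fin n)).card by simpa using hk)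
    refine ⟨F, hFcard, ?_⟩
    have hF1 : F.card ≤ 1 := by omega
    have hL : ∑ i ∈ F, ∑ j ∈ F, (if i ≠ j then A i j else 0) = 0 := by
      apply Finset.sum_eq_zero
      intro i hi
      apply Finset.sum_eq_zero
      intro j hj
      have : i = j := Finset.card_le_one.mp hF1 i hi j hj
      simp [this]
    rw [hL]
    positivity
end

section
/- Let f : ℝ₊ⁿ → ℝ be C² with all second partial derivatives nonpositive on the nonnegative orthant and f(0) = 0. Then f is subadditive on the orthant: f(x+y) ≤ f(x) + f(y) for all x, y ∈ ℝ₊ⁿ. -/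
theorem stmt2 (n : ℕ) (f : (Fin n → ℝ) → ℝ)
    (hf : ContDiff ℝ 2 f)
    (hsec : ∀ x : Fin n → ℝ, (∀ i, 0 ≤ x i) → ∀ i j : Fin n,
      fderiv ℝ (fun y => fderiv ℝ f y (Pi.single i 1)) x (Pi.single j 1) ≤ 0)
    (hf0 : f 0 = 0)
    (x y : Fin n → ℝ) (hx : ∀ i, 0 ≤ x i) (hy : ∀ i, 0 ≤ y i) :
    f (x + y) ≤ f x + f y := by
  have hdf : Differentiable ℝ f := hf.differentiable two_ne_zero
  have hdf1 : ContDiff ℝ 1 (fderiv ℝ f) := hf.fderiv_right (le_refl 2)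
  have hdff : Differentiable ℝ (fderiv ℝ f) := hdf1.differentiable one_ne_zero
  -- second derivative as bilinear form is nonpositive on nonneg vectors
  have hH : ∀ z : Fin n → ℝ, (∀ i, 0 ≤ z i) → ∀ v w : Fin n → ℝ,
      (∀ i, 0 ≤ v i) → (∀ i, 0 ≤ w i) →
      fderiv ℝ (fderiv ℝ f) z w v ≤ 0 := by
    intro z hz v w hv hw
    have hsingle : ∀ i j : Fin n,
        fderiv ℝ (fderiv ℝ f) z (Pi.single j 1) (Pi.single i 1) ≤ 0 := by
      intro i j
      have h := hsec z hz i j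
      have e := fderiv_clm_apply (c := fderiv ℝ f)
        (u := fun _ => (Pi.single i 1 : Fin n → ℝ)) (x := z)
        (hdff z) (differentiableAt_const _)
      rw [e] at h
      simpa using h
    have hw' : w = ∑ j, w j • (Pi.single j 1 : Fin n → ℝ) := by
      conv_lhs => rw [← Finset.univ_sum_single w]
      refine Finset.sum_congr rfl fun j _ => ?_
      rw [← Pi.single_smul, smul_eq_mul, mul_one]
    have hv' : v = ∑ i, v i • (Pi.single i 1 : Fin n → ℝ) := by
      conv_lhs => rw [← Finset.univ_sum_single v]
      refine Finset.sum_congr rfl fun i _ => ?_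
      rw [← Pi.single_smul, smul_eq_mul, mul_one]
    calc fderiv ℝ (fderiv ℝ f) z w v
        = ∑ j, ∑ i, w j * (v i *
            fderiv ℝ (fderiv ℝ f) z (Pi.single j 1) (Pi.single i 1)) := by
          conv_lhs => rw [hw', hv']
          simp only [map_sum, map_smul, ContinuousLinearMap.coe_sum',
            Finset.sum_apply, ContinuousLinearMap.smul_apply, smul_eq_mul,
            Finset.mul_sum]
          rw [Finset.sum_comm]
          exact Finset.sum_congr rfl fun j _ => Finset.sum_congr rfl fun i _ => by ring
      _ ≤ 0 := by
          refine Finset.sum_nonpos fun j _ => Finset.sum_nonpos fun i _ => ?_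
          exact mul_nonpos_of_nonneg_of_nonpos (hw j)
            (mul_nonpos_of_nonneg_of_nonpos (hv i) (hsingle i j))
  -- derivative of straight-line curves
  have curve : ∀ (a b : Fin n → ℝ) (s : ℝ),
      HasDerivAt (fun s : ℝ => s • b + a) b s := by
    intro a b s
    simpa using ((hasDerivAt_id s).smul_const b).add_const a
  have fstep : ∀ (a b : Fin n → ℝ) (t : ℝ),
      HasDerivAt (fun t : ℝ => f (t • b + a)) (fderiv ℝ f (t • b + a) b) t := by
    intro a b t
    exact (hdf (t • b + a)).hasFDerivAt.comp_hasDerivAt t (curve a b t)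
  have dstep : ∀ (a b d : Fin n → ℝ) (s : ℝ),
      HasDerivAt (fun s : ℝ => fderiv ℝ f (s • b + a) d)
        (fderiv ℝ (fderiv ℝ f) (s • b + a) b d) s := by
    intro a b d s
    have h1 : HasDerivAt (fun s : ℝ => fderiv ℝ f (s • b + a))
        (fderiv ℝ (fderiv ℝ f) (s • b + a) b) s :=
      (hdff (s • b + a)).hasFDerivAt.comp_hasDerivAt s (curve a b s)
    simpa using h1.clm_apply (hasDerivAt_const s d)
  -- monotonicity of directional derivative
  have mono1 : ∀ t : ℝ, 0 ≤ t →
      fderiv ℝ f (t • x + y) x ≤ fderiv ℝ f (t • x) x := by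
    intro t ht
    have hdiff : Differentiable ℝ (fun s : ℝ => fderiv ℝ f (s • y + t • x) x) :=
      fun s => (dstep (t • x) y x s).differentiableAt
    have key : AntitoneOn (fun s : ℝ => fderiv ℝ f (s • y + t • x) x)
        (Set.Icc 0 1) := by
      refine antitoneOn_of_deriv_nonpos (convex_Icc 0 1)
        hdiff.continuous.continuousOn hdiff.differentiableOn ?_
      intro s hs
      rw [interior_Icc] at hs
      rw [(dstep (t • x) y x s).deriv]
      refine hH _ (fun i => ?_) x y hx hy
      have : (0:ℝ) ≤ s := le_of_lt hs.1
      simpa using add_nonneg (mul_nonneg this (hy i)) (mul_nonneg ht (hx i))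
    have h01 := key (Set.mem_Icc.2 ⟨le_refl 0, zero_le_one⟩)
      (Set.mem_Icc.2 ⟨zero_le_one, le_refl 1⟩) zero_le_one
    simpa [add_comm] using h01
  -- the function t ↦ f(t•x + y) - f(t•x) is antitone on [0,1]
  have gstep : ∀ t : ℝ, HasDerivAt (fun t : ℝ => f (t • x + y) - f (t • x))
      (fderiv ℝ f (t • x + y) x - fderiv ℝ f (t • x) x) t := by
    intro t
    have h2 : HasDerivAt (fun t : ℝ => f (t • x)) (fderiv ℝ f (t • x) x) t := by
      simpa using fstep 0 x t
    exact (fstep y x t).sub h2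
  have hgdiff : Differentiable ℝ (fun t : ℝ => f (t • x + y) - f (t • x)) :=
    fun t => (gstep t).differentiableAt
  have mono2 : AntitoneOn (fun t : ℝ => f (t • x + y) - f (t • x))
      (Set.Icc 0 1) := by
    refine antitoneOn_of_deriv_nonpos (convex_Icc 0 1)
      hgdiff.continuous.continuousOn hgdiff.differentiableOn ?_
    intro t ht
    rw [interior_Icc] at ht
    rw [(gstep t).deriv]
    exact sub_nonpos.2 (mono1 t (le_of_lt ht.1))
  have h01 := mono2 (Set.mem_Icc.2 ⟨le_refl 0, zero_le_one⟩)
    (Set.mem_Icc.2 ⟨zero_le_one, le_refl 1⟩) zero_le_one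
  simp only [one_smul, zero_smul, zero_add] at h01
  rw [hf0] at h01
  linarith
end

section
/- Let (Z_t) be a Markov chain on a finite subset of ℝⁿ such that (i) for some ρ < 1 and all pairs of initial states z₀, z̃₀ there is a coupling with E[∑ᵢ |Z_t(i) − Z̃_t(i)|] ≤ ρᵗ ∑ᵢ |z₀(i) − z̃₀(i)|, and (ii) ∑ᵢ |Z_t(i) − Z_{t−1}(i)| ≤ R almost surely for all t. Then for every t and every starting state z, Var_z(∑ᵢ Z_t(i)) ≤ 2R²/(1 − ρ²). -/
open Finset

section aux

variable {α : Type*} [Fintype α] [DecidableEq α]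

lemma expand_sq (w x : α → ℝ) (hw : ∑ a, w a = 1) (d : ℝ) :
    ∑ a, w a * (x a - d)^2
      = (∑ a, w a * x a^2) - 2*d*(∑ b, w b * x b) + d^2 := by
  have h1 : ∀ a ∈ Finset.univ, w a * (x a - d)^2
      = w a * x a^2 - 2*d*(w a * x a) + d^2 * w a := fun a _ => by ring
  rw [Finset.sum_congr rfl h1, Finset.sum_add_distrib, Finset.sum_sub_distrib,
    ← Finset.mul_sum, ← Finset.mul_sum, hw]
  ring

/-- Bias–variance decomposition for a finite weighted sum. -/
lemma bias_var (w x : α → ℝ) (hw : ∑ a, w a = 1) (c : ℝ) :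
    ∑ a, w a * (x a - c)^2
      = (∑ a, w a * (x a - ∑ b, w b * x b)^2) + ((∑ b, w b * x b) - c)^2 := by
  rw [expand_sq w x hw c, expand_sq w x hw (∑ b, w b * x b)]
  ring

lemma var_pair (w x : α → ℝ) (hw : ∑ a, w a = 1) :
    ∑ a, w a * (x a - ∑ b, w b * x b)^2
      = (1/2) * ∑ a, ∑ b, w a * w b * (x a - x b)^2 := by
  set μ := ∑ b, w b * x b with hμ
  have hL : ∑ a, w a * (x a - μ)^2 = (∑ a, w a * x a^2) - μ^2 := by
    rw [expand_sq w x hw μ, ← hμ]; ring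
  have hR : ∑ a, ∑ b, w a * w b * (x a - x b)^2
      = 2 * ((∑ a, w a * x a^2) - μ^2) := by
    have h1 : ∀ a ∈ Finset.univ, ∑ b, w a * w b * (x a - x b)^2
        = (w a * x a^2) * (∑ b, w b) - 2 * (w a * x a) * (∑ b, w b * x b)
          + w a * (∑ b, w b * x b^2) := by
      intro a _
      rw [Finset.mul_sum, Finset.mul_sum, Finset.mul_sum, ← Finset.sum_sub_distrib,
        ← Finset.sum_add_distrib]
      exact Finset.sum_congr rfl fun b _ => by ring
    rw [Finset.sum_congr rfl h1, Finset.sum_add_distrib, Finset.sum_sub_distrib, hw]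
    have h2 : ∑ a, 2 * (w a * x a) * (∑ b, w b * x b) = 2 * μ^2 := by
      rw [← Finset.sum_mul, ← Finset.mul_sum, ← hμ]; ring
    have h3 : ∑ a, w a * (∑ b, w b * x b^2) = ∑ b, w b * x b^2 := by
      rw [← Finset.sum_mul, hw, one_mul]
    rw [h2, h3]; ring
  rw [hL, hR]; ring

end aux

section chain

variable {α : Type*} [Fintype α] [DecidableEq α]
variable (P : Matrix α α ℝ)

lemma pow_row_sum (hP1 : ∀ a, ∑ b, P a b = 1) :
    ∀ (t : ℕ) (a : α), ∑ b, (P ^ t) a b = 1 := by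
  intro t
  induction t with
  | zero => intro a; simp [Matrix.one_apply]
  | succ t ih =>
      intro a
      rw [pow_succ']
      simp only [Matrix.mul_apply]
      rw [Finset.sum_comm]
      calc ∑ c, ∑ b, P a c * (P ^ t) c b
          = ∑ c, P a c * ∑ b, (P ^ t) c b := by
            exact Finset.sum_congr rfl fun c _ => (Finset.mul_sum _ _ _).symm
        _ = 1 := by simp only [ih]; simpa using hP1 a

lemma pow_nonneg_entry (hP0 : ∀ a b, 0 ≤ P a b) :
    ∀ (t : ℕ) (a b : α), 0 ≤ (P ^ t) a b := by
  intro t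
  induction t with
  | zero => intro a b; rw [pow_zero, Matrix.one_apply]; positivity
  | succ t ih =>
      intro a b
      rw [pow_succ', Matrix.mul_apply]
      exact Finset.sum_nonneg fun c _ => mul_nonneg (hP0 a c) (ih c b)

end chain

section main

variable {α : Type*} [Fintype α] [DecidableEq α]

lemma contract_means (n : ℕ) (φ : α → Fin n → ℝ) (P : Matrix α α ℝ) (ρ : ℝ)
    (hcoupling : ∀ (t : ℕ) (z₀ z₀' : α), ∃ q : α → α → ℝ,
      (∀ a b, 0 ≤ q a b) ∧
      (∀ a, ∑ b, q a b = (P ^ t) z₀ a) ∧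
      (∀ b, ∑ a, q a b = (P ^ t) z₀' b) ∧
      ∑ a, ∑ b, q a b * (∑ i, |φ a i - φ b i|) ≤
        ρ ^ t * ∑ i, |φ z₀ i - φ z₀' i|)
    (t : ℕ) (a b : α) :
    |(∑ c, (P ^ t) a c * ∑ i, φ c i) - ∑ d, (P ^ t) b d * ∑ i, φ d i|
      ≤ ρ ^ t * ∑ i, |φ a i - φ b i| := by
  obtain ⟨q, hq0, hqa, hqb, hqc⟩ := hcoupling t a b
  set f : α → ℝ := fun c => ∑ i, φ c i with hf
  have h1 : ∑ c, (P ^ t) a c * f c = ∑ c, ∑ d, q c d * f c := by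
    refine Finset.sum_congr rfl fun c _ => ?_
    rw [← hqa c, Finset.sum_mul]
  have h2 : ∑ d, (P ^ t) b d * f d = ∑ c, ∑ d, q c d * f d := by
    rw [Finset.sum_comm]
    refine Finset.sum_congr rfl fun d _ => ?_
    rw [← hqb d, Finset.sum_mul]
  rw [h1, h2, ← Finset.sum_sub_distrib]
  calc |∑ c, (∑ d, q c d * f c - ∑ d, q c d * f d)|
      ≤ ∑ c, |∑ d, q c d * f c - ∑ d, q c d * f d| := Finset.abs_sum_le_sum_abs _ _
    _ = ∑ c, |∑ d, q c d * (f c - f d)| := by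
        refine Finset.sum_congr rfl fun c _ => ?_
        rw [← Finset.sum_sub_distrib]
        congr 1
        exact Finset.sum_congr rfl fun d _ => by ring
    _ ≤ ∑ c, ∑ d, |q c d * (f c - f d)| :=
        Finset.sum_le_sum fun c _ => Finset.abs_sum_le_sum_abs _ _
    _ ≤ ∑ c, ∑ d, q c d * (∑ i, |φ c i - φ d i|) := by
        refine Finset.sum_le_sum fun c _ => Finset.sum_le_sum fun d _ => ?_
        rw [abs_mul, abs_of_nonneg (hq0 c d)]
        refine mul_le_mul_of_nonneg_left ?_ (hq0 c d)
        calc |f c - f d| = |∑ i, (φ c i - φ d i)| := by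
              rw [hf]; simp [Finset.sum_sub_distrib]
          _ ≤ ∑ i, |φ c i - φ d i| := Finset.abs_sum_le_sum_abs _ _
    _ ≤ ρ ^ t * ∑ i, |φ a i - φ b i| := hqc

end main

section mainind

variable {α : Type*} [Fintype α] [DecidableEq α]

lemma var_bound_ind (n : ℕ) (φ : α → Fin n → ℝ) (P : Matrix α α ℝ)
    (hP0 : ∀ a b, 0 ≤ P a b) (hP1 : ∀ a, ∑ b, P a b = 1)
    (ρ R : ℝ) (hρ0 : 0 ≤ ρ) (hR : 0 ≤ R)
    (hstep : ∀ a b, 0 < P a b → ∑ i, |φ a i - φ b i| ≤ R)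
    (hcoupling : ∀ (t : ℕ) (z₀ z₀' : α), ∃ q : α → α → ℝ,
      (∀ a b, 0 ≤ q a b) ∧
      (∀ a, ∑ b, q a b = (P ^ t) z₀ a) ∧
      (∀ b, ∑ a, q a b = (P ^ t) z₀' b) ∧
      ∑ a, ∑ b, q a b * (∑ i, |φ a i - φ b i|) ≤
        ρ ^ t * ∑ i, |φ z₀ i - φ z₀' i|) :
    ∀ (t : ℕ) (z : α),
    ∑ a, (P ^ t) z a * ((∑ i, φ a i) - ∑ b, (P ^ t) z b * ∑ i, φ b i) ^ 2
      ≤ 2 * R ^ 2 * ∑ s ∈ Finset.range t, (ρ ^ 2) ^ s := by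
  set f : α → ℝ := fun c => ∑ i, φ c i with hf
  set m : ℕ → α → ℝ := fun t z => ∑ a, (P ^ t) z a * f a with hm
  intro t
  induction t with
  | zero =>
      intro z
      simp [Matrix.one_apply]
  | succ t ih =>
      intro z
      set c : ℝ := ∑ b, (P ^ (t+1)) z b * f b with hc
      have hpow : ∀ a b : α, (P ^ (t+1)) a b = ∑ d, P a d * (P ^ t) d b := by
        intro a b; rw [pow_succ', Matrix.mul_apply]
      -- step 1: condition on the first step
      have hsplit : ∑ a, (P ^ (t+1)) z a * (f a - c) ^ 2
          = ∑ a, P z a * ∑ b, (P ^ t) a b * (f b - c) ^ 2 := by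
        calc ∑ b, (P ^ (t+1)) z b * (f b - c) ^ 2
            = ∑ b, ∑ a, P z a * (P ^ t) a b * (f b - c) ^ 2 := by
              refine Finset.sum_congr rfl fun b _ => ?_
              rw [hpow z b, Finset.sum_mul]
          _ = ∑ a, ∑ b, P z a * (P ^ t) a b * (f b - c) ^ 2 := Finset.sum_comm
          _ = ∑ a, P z a * ∑ b, (P ^ t) a b * (f b - c) ^ 2 := by
              refine Finset.sum_congr rfl fun a _ => ?_
              rw [Finset.mul_sum]
              exact Finset.sum_congr rfl fun b _ => by ring
      -- step 2: bias-variance for each inner sum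
      have hinner : ∀ a : α, ∑ b, (P ^ t) a b * (f b - c) ^ 2
          = (∑ b, (P ^ t) a b * (f b - m t a) ^ 2) + (m t a - c) ^ 2 :=
        fun a => bias_var ((P ^ t) a) f (pow_row_sum P hP1 t a) c
      -- c is the mean of m t under P z
      have hcm : c = ∑ a, P z a * m t a := by
        rw [hc]
        calc ∑ b, (P ^ (t+1)) z b * f b
            = ∑ b, ∑ a, P z a * (P ^ t) a b * f b := by
              refine Finset.sum_congr rfl fun b _ => ?_
              rw [hpow z b, Finset.sum_mul]
          _ = ∑ a, ∑ b, P z a * (P ^ t) a b * f b := Finset.sum_comm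
          _ = ∑ a, P z a * m t a := by
              refine Finset.sum_congr rfl fun a _ => ?_
              rw [hm, Finset.mul_sum]
              exact Finset.sum_congr rfl fun b _ => by ring
      -- bound on the fluctuation of conditional means
      have hmeans : ∀ a b : α, 0 < P z a → 0 < P z b →
          |m t a - m t b| ≤ ρ ^ t * (2 * R) := by
        intro a b ha hb
        calc |m t a - m t b| ≤ ρ ^ t * ∑ i, |φ a i - φ b i| :=
              contract_means n φ P ρ hcoupling t a b
          _ ≤ ρ ^ t * (2 * R) := by
              refine mul_le_mul_of_nonneg_left ?_ (pow_nonneg hρ0 t)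
              calc ∑ i, |φ a i - φ b i|
                  ≤ ∑ i, (|φ z i - φ a i| + |φ z i - φ b i|) := by
                    refine Finset.sum_le_sum fun i _ => ?_
                    calc |φ a i - φ b i| ≤ |φ a i - φ z i| + |φ z i - φ b i| :=
                          abs_sub_le _ _ _
                      _ = |φ z i - φ a i| + |φ z i - φ b i| := by
                          rw [abs_sub_comm (φ a i) (φ z i)]
                _ = (∑ i, |φ z i - φ a i|) + ∑ i, |φ z i - φ b i| :=
                    Finset.sum_add_distrib
                _ ≤ R + R := add_le_add (hstep z a ha) (hstep z b hb)
                _ = 2 * R := by ring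
      -- second moment term bound
      have hvarstep : ∑ a, P z a * (m t a - c) ^ 2 ≤ 2 * (ρ ^ 2) ^ t * R ^ 2 := by
        rw [hcm, var_pair (P z) (m t) (hP1 z)]
        have hpt : ∑ a, ∑ b, P z a * P z b * (m t a - m t b) ^ 2
            ≤ ∑ a, ∑ b, P z a * P z b * (ρ ^ t * (2 * R)) ^ 2 := by
          refine Finset.sum_le_sum fun a _ => Finset.sum_le_sum fun b _ => ?_
          rcases eq_or_lt_of_le (hP0 z a) with ha | ha
          · rw [← ha]; simp
          rcases eq_or_lt_of_le (hP0 z b) with hb | hb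
          · rw [← hb]; simp
          refine mul_le_mul_of_nonneg_left ?_ (mul_nonneg (hP0 z a) (hP0 z b))
          have := hmeans a b ha hb
          calc (m t a - m t b) ^ 2 = |m t a - m t b| ^ 2 := (sq_abs _).symm
            _ ≤ (ρ ^ t * (2 * R)) ^ 2 := by
                refine pow_le_pow_left₀ (abs_nonneg _) this 2
        have hsum1 : ∑ a, ∑ b, P z a * P z b * (ρ ^ t * (2 * R)) ^ 2
            = (ρ ^ t * (2 * R)) ^ 2 := by
          calc ∑ a, ∑ b, P z a * P z b * (ρ ^ t * (2 * R)) ^ 2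
              = ∑ a, P z a * ((ρ ^ t * (2 * R)) ^ 2 * ∑ b, P z b) := by
                refine Finset.sum_congr rfl fun a _ => ?_
                rw [Finset.mul_sum, Finset.mul_sum]
                exact Finset.sum_congr rfl fun b _ => by ring
            _ = (ρ ^ t * (2 * R)) ^ 2 := by
                rw [hP1 z]
                rw [← Finset.sum_mul]
                rw [hP1 z]; ring
        have hexp : (ρ ^ t) ^ 2 = (ρ ^ 2) ^ t := by
          rw [← pow_mul, ← pow_mul, Nat.mul_comm]
        calc (1:ℝ)/2 * ∑ a, ∑ b, P z a * P z b * (m t a - m t b) ^ 2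
            ≤ (1:ℝ)/2 * ((ρ ^ t * (2 * R)) ^ 2) := by
              rw [← hsum1]
              exact mul_le_mul_of_nonneg_left hpt (by norm_num)
          _ = 2 * (ρ ^ t) ^ 2 * R ^ 2 := by ring
          _ = 2 * (ρ ^ 2) ^ t * R ^ 2 := by rw [hexp]
      -- first term bound via induction hypothesis
      have hfirst : ∑ a, P z a * ∑ b, (P ^ t) a b * (f b - m t a) ^ 2
          ≤ 2 * R ^ 2 * ∑ s ∈ Finset.range t, (ρ ^ 2) ^ s := by
        calc ∑ a, P z a * ∑ b, (P ^ t) a b * (f b - m t a) ^ 2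
            ≤ ∑ a, P z a * (2 * R ^ 2 * ∑ s ∈ Finset.range t, (ρ ^ 2) ^ s) := by
              refine Finset.sum_le_sum fun a _ => ?_
              exact mul_le_mul_of_nonneg_left (ih a) (hP0 z a)
          _ = 2 * R ^ 2 * ∑ s ∈ Finset.range t, (ρ ^ 2) ^ s := by
              rw [← Finset.sum_mul, hP1 z, one_mul]
      -- combine
      calc ∑ a, (P ^ (t+1)) z a * (f a - c) ^ 2
          = ∑ a, P z a * ((∑ b, (P ^ t) a b * (f b - m t a) ^ 2) + (m t a - c) ^ 2) := by
            rw [hsplit]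
            exact Finset.sum_congr rfl fun a _ => by rw [hinner a]
        _ = (∑ a, P z a * ∑ b, (P ^ t) a b * (f b - m t a) ^ 2)
              + ∑ a, P z a * (m t a - c) ^ 2 := by
            rw [← Finset.sum_add_distrib]
            exact Finset.sum_congr rfl fun a _ => by ring
        _ ≤ 2 * R ^ 2 * (∑ s ∈ Finset.range t, (ρ ^ 2) ^ s)
              + 2 * (ρ ^ 2) ^ t * R ^ 2 := add_le_add hfirst hvarstep
        _ = 2 * R ^ 2 * ∑ s ∈ Finset.range (t+1), (ρ ^ 2) ^ s := by
            rw [Finset.sum_range_succ]; ring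

end mainind

/-- Variance bound for a contracting Markov chain on a finite subset of ℝⁿ.
The chain is given by a row-stochastic transition matrix `P` on a finite state
space `α`, embedded in `ℝⁿ` via `φ`.  Hypotheses: (i) an ℓ¹-contracting coupling
of the time-`t` distributions from any two starting states, and (ii) each step
moves the configuration by ℓ¹-distance at most `R`.  Conclusion: the variance of
the coordinate sum at any time `t`, from any start `z`, is at most `2R²/(1-ρ²)`. -/
theorem stmt3 {α : Type*} [Fintype α] [DecidableEq α] [Nonempty α] (n : ℕ)
    (φ : α → Fin n → ℝ) (P : Matrix α α ℝ)
    (hP0 : ∀ a b, 0 ≤ P a b) (hP1 : ∀ a, ∑ b, P a b = 1)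
    (ρ R : ℝ) (hρ0 : 0 ≤ ρ) (hρ1 : ρ < 1) (hR : 0 ≤ R)
    (hstep : ∀ a b, 0 < P a b → ∑ i, |φ a i - φ b i| ≤ R)
    (hcoupling : ∀ (t : ℕ) (z₀ z₀' : α), ∃ q : α → α → ℝ,
      (∀ a b, 0 ≤ q a b) ∧
      (∀ a, ∑ b, q a b = (P ^ t) z₀ a) ∧
      (∀ b, ∑ a, q a b = (P ^ t) z₀' b) ∧
      ∑ a, ∑ b, q a b * (∑ i, |φ a i - φ b i|) ≤
        ρ ^ t * ∑ i, |φ z₀ i - φ z₀' i|)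
    (t : ℕ) (z : α) :
    ∑ a, (P ^ t) z a * ((∑ i, φ a i) - ∑ b, (P ^ t) z b * ∑ i, φ b i) ^ 2
      ≤ 2 * R ^ 2 / (1 - ρ ^ 2) := by
  have hρ2 : ρ ^ 2 < 1 := by nlinarith
  have hpos : (0:ℝ) < 1 - ρ ^ 2 := by linarith
  have hgeo : ∑ s ∈ Finset.range t, (ρ ^ 2) ^ s ≤ 1 / (1 - ρ ^ 2) := by
    have h := geom_sum_mul (ρ ^ 2) t
    have h1 : (∑ s ∈ Finset.range t, (ρ ^ 2) ^ s) * (1 - ρ ^ 2)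
        = 1 - (ρ ^ 2) ^ t := by linear_combination -h
    rw [le_div_iff₀ hpos, h1]
    have : (0:ℝ) ≤ (ρ ^ 2) ^ t := by positivity
    linarith
  calc ∑ a, (P ^ t) z a * ((∑ i, φ a i) - ∑ b, (P ^ t) z b * ∑ i, φ b i) ^ 2
      ≤ 2 * R ^ 2 * ∑ s ∈ Finset.range t, (ρ ^ 2) ^ s :=
        var_bound_ind n φ P hP0 hP1 ρ R hρ0 hR hstep hcoupling t z
    _ ≤ 2 * R ^ 2 * (1 / (1 - ρ ^ 2)) :=
        mul_le_mul_of_nonneg_left hgeo (by positivity)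
    _ = 2 * R ^ 2 / (1 - ρ ^ 2) := by rw [mul_one_div]
end

section
/- (Corollary of GHS) In the ferromagnetic Ising model with zero external field, for any vertex u and distinct vertices v₁, …, v_k, E_μ[σ(u) | σ(v₁) = ⋯ = σ(v_k) = 1] ≤ ∑_{i=1}^{k} E_μ[σ(u) | σ(vᵢ) = 1]. -/
open Finset

/-- Spin value: `true ↦ 1`, `false ↦ -1`. -/
noncomputable def spin (b : Bool) : ℝ := if b then 1 else -1

/-- Unnormalized Gibbs weight of the Ising model with interactions `J` and external
field `H`. -/
noncomputable def isingWeightH {V : Type*} [Fintype V] [DecidableEq V]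
    (J : V → V → ℝ) (H : V → ℝ) (σ : V → Bool) : ℝ :=
  Real.exp ((∑ u, ∑ v, J u v * spin (σ u) * spin (σ v)) + ∑ v, H v * spin (σ v))

/-- The local magnetization `m_u(H) = E_{μ^H}[σ(u)]`. -/
noncomputable def magnet {V : Type*} [Fintype V] [DecidableEq V]
    (J : V → V → ℝ) (u : V) (H : V → ℝ) : ℝ :=
  (∑ σ : V → Bool, spin (σ u) * isingWeightH J H σ) /
    ∑ σ : V → Bool, isingWeightH J H σ

/-- The Ising Gibbs probability of a configuration (zero external field). -/
noncomputable def isingMeasure {V : Type*} [Fintype V] [DecidableEq V]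
    (J : V → V → ℝ) (σ : V → Bool) : ℝ :=
  isingWeightH J 0 σ / ∑ τ : V → Bool, isingWeightH J 0 τ

/-- Conditional expectation of the spin at `u` given `σ(v) = 1` for every `v ∈ A`. -/
noncomputable def condMagnetOn {V : Type*} [Fintype V] [DecidableEq V]
    (J : V → V → ℝ) (u : V) (A : Finset V) : ℝ :=
  (∑ σ ∈ Finset.univ.filter (fun σ : V → Bool => ∀ v ∈ A, σ v = true),
      spin (σ u) * isingMeasure J σ) /
    ∑ σ ∈ Finset.univ.filter (fun σ : V → Bool => ∀ v ∈ A, σ v = true),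
      isingMeasure J σ


section AuxGHS
variable {V : Type*} [Fintype V] [DecidableEq V] (J : V → V → ℝ) (u : V)
open Filter Topology

lemma spin_not (b : Bool) : spin (!b) = -spin b := by cases b <;> simp [spin]

lemma spin_le_one (b : Bool) : spin b ≤ 1 := by cases b <;> simp [spin]

lemma spin_true : spin true = 1 := by simp [spin]

lemma spin_false_lt : spin false < 1 := by norm_num [spin]

lemma denom_pos (H : V → ℝ) : 0 < ∑ σ : V → Bool, isingWeightH J H σ :=
  Finset.sum_pos (fun _σ _ => Real.exp_pos _) Finset.univ_nonempty

lemma contDiff_magnet : ContDiff ℝ 2 (magnet J u) := by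
  have hterm : ∀ σ : V → Bool, ContDiff ℝ 2 (fun H : V → ℝ => isingWeightH J H σ) := by
    intro σ
    apply Real.contDiff_exp.comp
    apply ContDiff.add contDiff_const
    exact ContDiff.sum fun v _ => ((ContinuousLinearMap.proj v :
      (V → ℝ) →L[ℝ] ℝ).contDiff).mul contDiff_const
  exact ContDiff.div (ContDiff.sum fun σ _ => contDiff_const.mul (hterm σ))
    (ContDiff.sum fun σ _ => hterm σ) (fun H => (denom_pos J H).ne')

lemma magnet_zero : magnet J u 0 = 0 := by
  have hw : ∀ σ : V → Bool, isingWeightH J 0 (fun v => !(σ v)) = isingWeightH J 0 σ := by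
    intro σ
    unfold isingWeightH
    congr 1
    have h1 : ∀ a b : V, J a b * spin (!(σ a)) * spin (!(σ b))
        = J a b * spin (σ a) * spin (σ b) := by
      intro a b; rw [spin_not, spin_not]; ring
    simp only [Pi.zero_apply, zero_mul, Finset.sum_const_zero, add_zero, h1]
  have key : (∑ σ : V → Bool, spin (σ u) * isingWeightH J 0 σ) = 0 := by
    let e : Equiv.Perm (V → Bool) :=
      Function.Involutive.toPerm (fun σ v => !(σ v)) (fun σ => by funext v; simp)
    have h1 : (∑ σ : V → Bool, spin (σ u) * isingWeightH J 0 σ)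
        = ∑ σ : V → Bool, spin ((e σ) u) * isingWeightH J 0 (e σ) :=
      (Equiv.sum_comp e (fun σ => spin (σ u) * isingWeightH J 0 σ)).symm
    have h2 : ∀ σ : V → Bool, spin ((e σ) u) * isingWeightH J 0 (e σ)
        = -(spin (σ u) * isingWeightH J 0 σ) := by
      intro σ
      show spin (!(σ u)) * isingWeightH J 0 (fun v => !(σ v)) = _
      rw [spin_not, hw]; ring
    simp only [h2, Finset.sum_neg_distrib] at h1
    linarith
  unfold magnet
  rw [key, zero_div]

lemma clm_expand (L : (V → ℝ) →L[ℝ] ℝ) (x : V → ℝ) :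
    L x = ∑ v, x v * L (Pi.single v 1) := by
  have hx : x = ∑ v, x v • (Pi.single v 1 : V → ℝ) := by
    funext j
    simp [Finset.sum_apply, Pi.single_apply, mul_ite, Finset.sum_ite_eq']
  conv_lhs => rw [hx]
  rw [map_sum]
  simp [smul_eq_mul]

lemma diff_dm (z : V → ℝ) :
    Differentiable ℝ (fun H' => fderiv ℝ (magnet J u) H' z) := by
  have h1 : ContDiff ℝ 1 (fderiv ℝ (magnet J u)) :=
    (contDiff_magnet J u).fderiv_right (by norm_num)
  exact (h1.differentiable (by norm_num)).clm_apply (differentiable_const z)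

lemma D2_nonpos
    (hGHS : ∀ H : V → ℝ, (∀ v, 0 ≤ H v) → ∀ v w : V,
      fderiv ℝ (fun H' => fderiv ℝ (magnet J u) H' (Pi.single v 1)) H
        (Pi.single w 1) ≤ 0)
    (H x y : V → ℝ) (hH : ∀ v, 0 ≤ H v) (hx : ∀ v, 0 ≤ x v) (hy : ∀ v, 0 ≤ y v) :
    fderiv ℝ (fun H' => fderiv ℝ (magnet J u) H' x) H y ≤ 0 := by
  have hx1 : (fun H' => fderiv ℝ (magnet J u) H' x)
      = fun H' => ∑ v, x v * fderiv ℝ (magnet J u) H' (Pi.single v 1) :=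
    funext fun H' => clm_expand _ x
  rw [hx1, fderiv_fun_sum (fun v _ =>
    ((diff_dm J u (Pi.single v 1)).differentiableAt).const_mul (x v))]
  rw [ContinuousLinearMap.sum_apply]
  apply Finset.sum_nonpos
  intro v _
  rw [fderiv_const_mul ((diff_dm J u (Pi.single v 1)).differentiableAt) (x v)]
  rw [ContinuousLinearMap.smul_apply, smul_eq_mul]
  apply mul_nonpos_of_nonneg_of_nonpos (hx v)
  rw [clm_expand]
  apply Finset.sum_nonpos
  intro w _
  exact mul_nonpos_of_nonneg_of_nonpos (hy w) (hGHS H hH v w)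

lemma fderiv_dir_antitone
    (hGHS : ∀ H : V → ℝ, (∀ v, 0 ≤ H v) → ∀ v w : V,
      fderiv ℝ (fun H' => fderiv ℝ (magnet J u) H' (Pi.single v 1)) H
        (Pi.single w 1) ≤ 0)
    (A H1 H2 : V → ℝ) (hA : ∀ v, 0 ≤ A v) (h1 : ∀ v, 0 ≤ H1 v) (h2 : ∀ v, 0 ≤ H2 v) :
    fderiv ℝ (magnet J u) (A + H2) H1 ≤ fderiv ℝ (magnet J u) A H1 := by
  set G : ℝ → ℝ := fun t => fderiv ℝ (magnet J u) (A + t • H2) H1 with hGdef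
  have hline : ∀ t : ℝ, HasDerivAt (fun t : ℝ => A + t • H2) H2 t := fun t => by
    simpa using ((hasDerivAt_id t).smul_const H2).const_add A
  have hG : ∀ t : ℝ, HasDerivAt G
      (fderiv ℝ (fun H' => fderiv ℝ (magnet J u) H' H1) (A + t • H2) H2) t := fun t =>
    ((diff_dm J u H1).differentiableAt.hasFDerivAt).comp_hasDerivAt t (hline t)
  have anti : AntitoneOn G (Set.Icc 0 1) := by
    apply antitoneOn_of_deriv_nonpos (convex_Icc 0 1)
    · exact fun t _ => (hG t).continuousAt.continuousWithinAt
    · exact fun t _ => (hG t).differentiableAt.differentiableWithinAt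
    · intro t ht
      rw [interior_Icc] at ht
      rw [(hG t).deriv]
      exact D2_nonpos J u hGHS _ H1 H2
        (fun v => add_nonneg (hA v) (mul_nonneg ht.1.le (h2 v))) h1 h2
  have h01 := anti (Set.left_mem_Icc.mpr zero_le_one) (Set.right_mem_Icc.mpr zero_le_one)
    zero_le_one
  simpa [hGdef] using h01

lemma magnet_subadd
    (hGHS : ∀ H : V → ℝ, (∀ v, 0 ≤ H v) → ∀ v w : V,
      fderiv ℝ (fun H' => fderiv ℝ (magnet J u) H' (Pi.single v 1)) H
        (Pi.single w 1) ≤ 0)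
    (H1 H2 : V → ℝ) (h1 : ∀ v, 0 ≤ H1 v) (h2 : ∀ v, 0 ≤ H2 v) :
    magnet J u (H1 + H2) ≤ magnet J u H1 + magnet J u H2 - magnet J u 0 := by
  have hdm : Differentiable ℝ (magnet J u) :=
    (contDiff_magnet J u).differentiable (by norm_num)
  set F : ℝ → ℝ := fun s => magnet J u (H2 + s • H1) - magnet J u (s • H1) with hFdef
  have hline : ∀ (c : V → ℝ) (s : ℝ),
      HasDerivAt (fun s : ℝ => c + s • H1) H1 s := fun c s => by
    simpa using ((hasDerivAt_id s).smul_const H1).const_add c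
  have hF : ∀ s : ℝ, HasDerivAt F
      (fderiv ℝ (magnet J u) (H2 + s • H1) H1 - fderiv ℝ (magnet J u) (s • H1) H1) s := by
    intro s
    apply HasDerivAt.sub
    · exact (hdm.differentiableAt.hasFDerivAt).comp_hasDerivAt s (hline H2 s)
    · have := (hdm.differentiableAt.hasFDerivAt).comp_hasDerivAt s (hline 0 s)
      simpa [Function.comp_def] using this
  have anti : AntitoneOn F (Set.Icc 0 1) := by
    apply antitoneOn_of_deriv_nonpos (convex_Icc 0 1)
    · exact fun t _ => (hF t).continuousAt.continuousWithinAt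
    · exact fun t _ => (hF t).differentiableAt.differentiableWithinAt
    · intro t ht
      rw [interior_Icc] at ht
      rw [(hF t).deriv, sub_nonpos]
      have h := fderiv_dir_antitone J u hGHS (t • H1) H1 H2
        (fun v => mul_nonneg ht.1.le (h1 v)) h1 h2
      rw [add_comm H2 (t • H1)]
      exact h
  have h01 := anti (Set.left_mem_Icc.mpr zero_le_one) (Set.right_mem_Icc.mpr zero_le_one)
    zero_le_one
  simp only [hFdef, one_smul, zero_smul, add_zero] at h01
  have : magnet J u (H2 + H1) = magnet J u (H1 + H2) := by rw [add_comm]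
  linarith [h01]

lemma magnet_sum_le
    (hGHS : ∀ H : V → ℝ, (∀ v, 0 ≤ H v) → ∀ v w : V,
      fderiv ℝ (fun H' => fderiv ℝ (magnet J u) H' (Pi.single v 1)) H
        (Pi.single w 1) ≤ 0)
    {ι : Type*} [DecidableEq ι] (s : Finset ι) (Hi : ι → V → ℝ)
    (h : ∀ i ∈ s, ∀ v, 0 ≤ Hi i v) :
    magnet J u (∑ i ∈ s, Hi i) ≤ ∑ i ∈ s, magnet J u (Hi i) := by
  induction s using Finset.induction_on with
  | empty => simp [magnet_zero J u]
  | insert a s ha ih =>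
    rw [Finset.sum_insert ha, Finset.sum_insert ha]
    have hs : ∀ v, 0 ≤ (∑ i ∈ s, Hi i) v := by
      intro w
      rw [Finset.sum_apply]
      exact Finset.sum_nonneg fun i hi => h i (Finset.mem_insert_of_mem hi) w
    have h1 := magnet_subadd J u hGHS (Hi a) (∑ i ∈ s, Hi i)
      (h a (Finset.mem_insert_self a s)) hs
    have h2 := ih (fun i hi => h i (Finset.mem_insert_of_mem hi))
    rw [magnet_zero J u] at h1
    linarith

lemma weight_zero (σ : V → Bool) :
    isingWeightH J 0 σ = Real.exp (∑ a, ∑ b, J a b * spin (σ a) * spin (σ b)) := by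
  unfold isingWeightH
  simp

lemma condMagnet_ratio (A : Finset V) :
    condMagnetOn J u A =
      (∑ σ ∈ Finset.univ.filter (fun σ : V → Bool => ∀ v ∈ A, σ v = true),
        spin (σ u) * isingWeightH J 0 σ) /
      ∑ σ ∈ Finset.univ.filter (fun σ : V → Bool => ∀ v ∈ A, σ v = true),
        isingWeightH J 0 σ := by
  unfold condMagnetOn isingMeasure
  set Z := ∑ τ : V → Bool, isingWeightH J 0 τ with hZdef
  have hZ : Z ≠ 0 := (denom_pos J 0).ne'
  have h1 : ∀ σ : V → Bool, spin (σ u) * (isingWeightH J 0 σ / Z)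
      = spin (σ u) * isingWeightH J 0 σ / Z := fun σ => by ring
  simp only [h1]
  rw [← Finset.sum_div, ← Finset.sum_div, div_div_div_comm, div_self hZ, div_one]

lemma tendsto_magnet_cond (A : Finset V) :
    Tendsto (fun h : ℝ => magnet J u (fun w => if w ∈ A then h else 0)) atTop
      (𝓝 (condMagnetOn J u A)) := by
  classical
  set Q : (V → Bool) → ℝ := fun σ => ∑ a, ∑ b, J a b * spin (σ a) * spin (σ b) with hQ
  set S : (V → Bool) → ℝ := fun σ => ∑ w ∈ A, spin (σ w) with hS
  set c : ℝ := (A.card : ℝ) with hc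
  set P : Finset (V → Bool) := Finset.univ.filter (fun σ => ∀ v ∈ A, σ v = true) with hP
  have hW : ∀ (h : ℝ) (σ : V → Bool),
      isingWeightH J (fun w => if w ∈ A then h else 0) σ
        = Real.exp (Q σ) * Real.exp (h * S σ) := by
    intro h σ
    unfold isingWeightH
    rw [Real.exp_add]
    congr 2
    have hite : ∀ v : V, (if v ∈ A then h else 0) * spin (σ v)
        = if v ∈ A then h * spin (σ v) else 0 := by
      intro v; split <;> simp
    rw [Finset.sum_congr rfl (fun v _ => hite v), Finset.sum_ite_mem,
      Finset.univ_inter, Finset.mul_sum]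
  have hSeq : ∀ σ ∈ P, S σ = c := by
    intro σ hσ
    rw [hS]
    simp only
    rw [Finset.sum_congr rfl
      (fun w hw => by rw [(Finset.mem_filter.mp hσ).2 w hw, spin_true])]
    simp [hc]
  have hSlt : ∀ σ ∉ P, S σ < c := by
    intro σ hσ
    rw [hP, Finset.mem_filter] at hσ
    push_neg at hσ
    obtain ⟨w, hwA, hw⟩ := hσ (Finset.mem_univ σ)
    have hlt : S σ < ∑ _w ∈ A, (1 : ℝ) := by
      apply Finset.sum_lt_sum (fun i _ => spin_le_one _)
      refine ⟨w, hwA, ?_⟩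
      have : σ w = false := by cases hcase : σ w with
        | false => rfl
        | true => exact absurd hcase hw
      rw [this]; exact spin_false_lt
    simpa [hc] using hlt
  set g : (V → Bool) → ℝ → ℝ :=
    fun σ h => Real.exp (Q σ) * Real.exp (h * (S σ - c)) with hgdef
  have hg : ∀ σ, Tendsto (g σ) atTop (𝓝 (if σ ∈ P then Real.exp (Q σ) else 0)) := by
    intro σ
    by_cases hσ : σ ∈ P
    · rw [if_pos hσ]
      have : g σ = fun _ => Real.exp (Q σ) := by
        funext h
        rw [hgdef]
        simp only [hSeq σ hσ, sub_self, mul_zero, Real.exp_zero, mul_one]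
      rw [this]
      exact tendsto_const_nhds
    · rw [if_neg hσ]
      have hd : S σ - c < 0 := sub_neg.mpr (hSlt σ hσ)
      have h1 : Tendsto (fun h : ℝ => h * (S σ - c)) atTop atBot :=
        Tendsto.atTop_mul_const_of_neg hd tendsto_id
      have h2 := (Real.tendsto_exp_atBot.comp h1).const_mul (Real.exp (Q σ))
      simpa [hgdef] using h2
  have hN : Tendsto (fun h => ∑ σ : V → Bool, spin (σ u) * g σ h) atTop
      (𝓝 (∑ σ ∈ P, spin (σ u) * Real.exp (Q σ))) := by
    have := tendsto_finset_sum (Finset.univ : Finset (V → Bool))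
      (fun σ _ => (hg σ).const_mul (spin (σ u)))
    have heq : (∑ σ : V → Bool, spin (σ u) * (if σ ∈ P then Real.exp (Q σ) else 0))
        = ∑ σ ∈ P, spin (σ u) * Real.exp (Q σ) := by
      simp only [mul_ite, mul_zero]
      rw [Finset.sum_ite_mem, Finset.univ_inter]
    rwa [heq] at this
  have hD : Tendsto (fun h => ∑ σ : V → Bool, g σ h) atTop
      (𝓝 (∑ σ ∈ P, Real.exp (Q σ))) := by
    have := tendsto_finset_sum (Finset.univ : Finset (V → Bool)) (fun σ _ => hg σ)
    have heq : (∑ σ : V → Bool, (if σ ∈ P then Real.exp (Q σ) else 0))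
        = ∑ σ ∈ P, Real.exp (Q σ) := by
      rw [Finset.sum_ite_mem, Finset.univ_inter]
    rwa [heq] at this
  have hPne : (fun _ : V => true) ∈ P := by
    rw [hP, Finset.mem_filter]; exact ⟨Finset.mem_univ _, fun v _ => rfl⟩
  have hDpos : 0 < ∑ σ ∈ P, Real.exp (Q σ) :=
    Finset.sum_pos (fun σ _ => Real.exp_pos _) ⟨_, hPne⟩
  have hfin := Tendsto.div hN hD hDpos.ne'
  have hmag : ∀ h : ℝ, magnet J u (fun w => if w ∈ A then h else 0)
      = (∑ σ : V → Bool, spin (σ u) * g σ h) / ∑ σ : V → Bool, g σ h := by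
    intro h
    unfold magnet
    have he : Real.exp (-(h * c)) ≠ 0 := Real.exp_ne_zero _
    rw [← mul_div_mul_right _ _ he]
    congr 1
    · rw [Finset.sum_mul]
      apply Finset.sum_congr rfl
      intro σ _
      have hexp : Real.exp (h * (S σ - c))
          = Real.exp (h * S σ) * Real.exp (-(h * c)) := by
        rw [← Real.exp_add]; ring_nf
      rw [hW h σ, hgdef]
      simp only
      rw [hexp]; ring
    · rw [Finset.sum_mul]
      apply Finset.sum_congr rfl
      intro σ _
      have hexp : Real.exp (h * (S σ - c))
          = Real.exp (h * S σ) * Real.exp (-(h * c)) := by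
        rw [← Real.exp_add]; ring_nf
      rw [hW h σ, hgdef]
      simp only
      rw [hexp]; ring
  have hval : condMagnetOn J u A
      = (∑ σ ∈ P, spin (σ u) * Real.exp (Q σ)) / ∑ σ ∈ P, Real.exp (Q σ) := by
    rw [condMagnet_ratio]
    congr 1
    · exact Finset.sum_congr rfl (fun σ _ => by rw [weight_zero])
    · exact Finset.sum_congr rfl (fun σ _ => by rw [weight_zero])
  rw [hval]
  exact Tendsto.congr (fun h => (hmag h).symm) hfin

end AuxGHS

/-- Corollary of the GHS inequality: in the ferromagnetic Ising model with zero
external field, for any vertex `u` and distinct vertices `v₁, …, v_k`,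
`E_μ[σ(u) ∣ σ(v₁) = ⋯ = σ(v_k) = 1] ≤ ∑ᵢ E_μ[σ(u) ∣ σ(vᵢ) = 1]`.  The GHS
inequality (nonpositive second partials of the magnetization in the external field,
on the nonnegative orthant) is taken as a hypothesis. -/
theorem stmt13 {V : Type*} [Fintype V] [DecidableEq V]
    (J : V → V → ℝ) (hJ : ∀ u v, 0 ≤ J u v) (hJsymm : ∀ u v, J u v = J v u) (u : V)
    (hGHS : ∀ H : V → ℝ, (∀ v, 0 ≤ H v) → ∀ v w : V,
      fderiv ℝ (fun H' => fderiv ℝ (magnet J u) H' (Pi.single v 1)) H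
        (Pi.single w 1) ≤ 0)
    (k : ℕ) (v : Fin k → V) (hv : Function.Injective v) :
    condMagnetOn J u (Finset.image v Finset.univ) ≤
      ∑ i : Fin k, condMagnetOn J u {v i} := by
  classical
  set A : Finset V := Finset.image v Finset.univ with hA
  have hfield : ∀ h : ℝ, (fun w => if w ∈ A then h else 0)
      = ∑ i : Fin k, (fun w => if w ∈ ({v i} : Finset V) then h else 0) := by
    intro h
    funext w
    rw [Finset.sum_apply]
    simp only [Finset.mem_singleton]
    by_cases hw : w ∈ A
    · rw [if_pos hw]
      obtain ⟨j, _, hj⟩ := Finset.mem_image.mp hw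
      rw [Finset.sum_eq_single j]
      · rw [if_pos hj.symm]
      · intro i _ hij
        rw [if_neg]
        intro hwi
        exact hij (hv (hwi.symm.trans hj.symm))
      · intro hj'; exact absurd (Finset.mem_univ j) hj'
    · rw [if_neg hw]
      symm
      apply Finset.sum_eq_zero
      intro i _
      rw [if_neg]
      intro hwi
      exact hw (hA ▸ Finset.mem_image.mpr ⟨i, Finset.mem_univ i, hwi.symm⟩)
  have hineq : ∀ h : ℝ, 0 ≤ h →
      magnet J u (fun w => if w ∈ A then h else 0)
        ≤ ∑ i : Fin k, magnet J u (fun w => if w ∈ ({v i} : Finset V) then h else 0) := by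
    intro h hh
    rw [hfield h]
    exact magnet_sum_le J u hGHS Finset.univ _
      (fun i _ w => by split <;> simp [hh])
  have hT1 := tendsto_magnet_cond J u A
  have hT2 := tendsto_finset_sum (Finset.univ : Finset (Fin k))
    (fun i (_ : i ∈ Finset.univ) => tendsto_magnet_cond J u {v i})
  exact le_of_tendsto_of_tendsto hT1 hT2
    (Filter.eventually_atTop.mpr ⟨0, fun h hh => hineq h hh⟩)
end
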